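/- Let Assumption 1 hold (for every i, ℓ_{y_i} is differentiable on ℝ^{d_y}, convex, and nonnegative) and let λ > 0. Then for any θ ∈ ℝ^{d_θ} that is not a global minimum of L, there is no local minimum (a, b, W) ∈ ℝ^{d_y} × ℝ^{d_y} × ℝ^{d_x × d_y} of the restricted map L̃|_θ : (a,b,W) ↦ L̃(θ,a,b,W). -/

import Mathlib

open scoped RealInnerProductSpace

noncomputable section

/-- The added neuron: `g(x; a, b, W)ₖ = aₖ · exp(⟨wₖ, x⟩ + bₖ)`. -/
def addedNeuron (dx dy : ℕ) (a b : EuclideanSpace ℝ (Fin dy))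
    (W : Fin dy → EuclideanSpace ℝ (Fin dx)) (x : EuclideanSpace ℝ (Fin dx)) :
    EuclideanSpace ℝ (Fin dy) :=
  WithLp.toLp 2 fun k => a k * Real.exp (⟪W k, x⟫ + b k)

open Finset

/-! ### Auxiliary lemmas -/

/-- Derivative step: powers-weighted exponential sums. -/
lemma expsum_hasDerivAt (n : ℕ) (c l : Fin n → ℝ) (s : ℝ) :
    HasDerivAt (fun t => ∑ i, c i * Real.exp (l i * t))
      (∑ i, (c i * l i) * Real.exp (l i * s)) s := by
  apply HasDerivAt.fun_sum
  intro i _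
  have h1 : HasDerivAt (fun t => l i * t) (l i) s := by
    simpa using (hasDerivAt_id s).const_mul (l i)
  have h2 : HasDerivAt (fun t => Real.exp (l i * t)) (Real.exp (l i * s) * l i) s :=
    (Real.hasDerivAt_exp _).comp s h1
  have := h2.const_mul (c i)
  exact this.congr_deriv (by ring)

open Classical in
/-- If an exponential sum vanishes on a neighborhood of `0`, all grouped coefficients vanish. -/
lemma expsum_eq_zero (n : ℕ) (c l : Fin n → ℝ) (δ : ℝ) (hδ : 0 < δ)
    (h : ∀ s : ℝ, |s| < δ → ∑ i, c i * Real.exp (l i * s) = 0) (i : Fin n) :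
    ∑ j ∈ Finset.univ.filter (fun j => l j = l i), c j = 0 := by
  have key : ∀ (N : ℕ) (s : ℝ), |s| < δ → ∑ j, (c j * l j ^ N) * Real.exp (l j * s) = 0 := by
    intro N
    induction N with
    | zero => simpa using h
    | succ N ih =>
      intro s hs
      have hd : HasDerivAt (fun t => ∑ j, (c j * l j ^ N) * Real.exp (l j * t))
          (∑ j, ((c j * l j ^ N) * l j) * Real.exp (l j * s)) s :=
        expsum_hasDerivAt n _ l s
      have hev : (fun t => ∑ j, (c j * l j ^ N) * Real.exp (l j * t)) =ᶠ[nhds s]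
          (fun _ => (0:ℝ)) := by
        have : Metric.ball (0:ℝ) δ ∈ nhds s := by
          apply Metric.isOpen_ball.mem_nhds
          simpa [Real.dist_eq] using hs
        filter_upwards [this] with t ht
        exact ih t (by simpa [Real.dist_eq] using ht)
      have hd0 : HasDerivAt (fun _ : ℝ => (0:ℝ))
          (∑ j, ((c j * l j ^ N) * l j) * Real.exp (l j * s)) s :=
        (hev.hasDerivAt_iff).mp hd
      have := hd0.unique (hasDerivAt_const s 0)
      calc ∑ j, (c j * l j ^ (N+1)) * Real.exp (l j * s)
          = ∑ j, ((c j * l j ^ N) * l j) * Real.exp (l j * s) := by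
            apply Finset.sum_congr rfl; intro j _; ring_nf
        _ = 0 := this
  have pows : ∀ N : ℕ, ∑ j, c j * l j ^ N = 0 := by
    intro N
    have := key N 0 (by simpa using hδ)
    simpa using this
  set T : Finset ℝ := Finset.univ.image l with hT
  set C : ℝ → ℝ := fun μ => ∑ j ∈ Finset.univ.filter (fun j => l j = μ), c j with hC
  have grouped : ∀ N : ℕ, ∑ μ ∈ T, C μ * μ ^ N = 0 := by
    intro N
    rw [← pows N]
    rw [← Finset.sum_fiberwise_of_maps_to (g := l) (t := T)
      (fun j _ => Finset.mem_image_of_mem l (Finset.mem_univ j)) (fun j => c j * l j ^ N)]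
    apply Finset.sum_congr rfl
    intro μ _
    rw [hC, Finset.sum_mul]
    apply Finset.sum_congr rfl
    intro k hk
    have : l k = μ := (Finset.mem_filter.mp hk).2
    rw [this]
  let e : Fin T.card ≃ T := (Finset.orderIsoOfFin T rfl).toEquiv
  have hinj : Function.Injective (fun j : Fin T.card => (e j : ℝ)) := by
    intro a b hab
    exact e.injective (Subtype.ext hab)
  have hzero : (fun j : Fin T.card => C (e j : ℝ)) = 0 := by
    apply Matrix.eq_zero_of_forall_pow_sum_mul_pow_eq_zero hinj
    intro N
    calc ∑ j : Fin T.card, C (e j : ℝ) * (e j : ℝ) ^ (N : ℕ)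
        = ∑ μ : T, C (μ : ℝ) * (μ : ℝ) ^ (N : ℕ) :=
          Equiv.sum_comp e (fun μ : T => C (μ:ℝ) * (μ:ℝ) ^ (N:ℕ))
      _ = ∑ μ ∈ T, C μ * μ ^ (N : ℕ) := Finset.sum_coe_sort T (fun μ => C μ * μ ^ (N:ℕ))
      _ = 0 := grouped (N : ℕ)
  have hmem : l i ∈ T := Finset.mem_image_of_mem l (Finset.mem_univ i)
  have hCli : C (l i) = 0 := by
    have := congrFun hzero (e.symm ⟨l i, hmem⟩)
    simpa using this
  simpa [hC] using hCli

/-- A generic direction separating finitely many points. -/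
lemma exists_separating_direction (m dx : ℕ) (x : Fin m → EuclideanSpace ℝ (Fin dx)) :
    ∃ v : EuclideanSpace ℝ (Fin dx), ∀ i j, ⟪v, x i⟫ = ⟪v, x j⟫ → x i = x j := by
  by_contra hcon
  push_neg at hcon
  classical
  set s : Fin m × Fin m → Set (EuclideanSpace ℝ (Fin dx)) := fun p =>
    if x p.1 = x p.2 then ∅ else {v | ⟪x p.1 - x p.2, v⟫ = 0} with hs
  have hclosed : ∀ p, IsClosed (s p) := by
    intro p
    rw [hs]
    dsimp only
    split
    · exact isClosed_empty
    · exact isClosed_eq (Continuous.inner continuous_const continuous_id) continuous_const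
  have hunion : (⋃ p, s p) = Set.univ := by
    apply Set.eq_univ_of_forall
    intro v
    obtain ⟨i, j, hij, hne⟩ := hcon v
    refine Set.mem_iUnion.mpr ⟨(i, j), ?_⟩
    rw [hs]
    simp only [if_neg hne]
    simp only [Set.mem_setOf_eq, inner_sub_left]
    have h1 : ⟪x i, v⟫ = ⟪v, x i⟫ := real_inner_comm _ _
    have h2 : ⟪x j, v⟫ = ⟪v, x j⟫ := real_inner_comm _ _
    linarith
  obtain ⟨p, hp⟩ := nonempty_interior_of_iUnion_of_closed hclosed hunion
  by_cases hxy : x p.1 = x p.2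
  · rw [hs] at hp; simp [if_pos hxy] at hp
  · set u := x p.1 - x p.2 with hu
    have hset : s p = (LinearMap.ker ((innerSL ℝ u : EuclideanSpace ℝ (Fin dx) →L[ℝ] ℝ) :
          EuclideanSpace ℝ (Fin dx) →ₗ[ℝ] ℝ) :
        Set (EuclideanSpace ℝ (Fin dx))) := by
      rw [hs]
      simp only [if_neg hxy]
      ext v
      simp only [Set.mem_setOf_eq, SetLike.mem_coe, LinearMap.mem_ker,
        ContinuousLinearMap.coe_coe, innerSL_apply_apply, hu]
    rw [hset] at hp
    have htop := Submodule.eq_top_of_nonempty_interior' _ hp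
    have hmem : u ∈ LinearMap.ker ((innerSL ℝ u : EuclideanSpace ℝ (Fin dx) →L[ℝ] ℝ) :
        EuclideanSpace ℝ (Fin dx) →ₗ[ℝ] ℝ) := by
      rw [htop]; trivial
    have hu0 : ⟪u, u⟫ = 0 := by
      simpa [LinearMap.mem_ker] using hmem
    have : u = 0 := by rwa [inner_self_eq_zero] at hu0
    exact hxy (sub_eq_zero.mp (hu ▸ this))

/-- Gradient inequality for a convex differentiable function. -/
lemma convex_grad_ineq {E : Type*} [NormedAddCommGroup E] [NormedSpace ℝ E]
    (F : E → ℝ) (hc : ConvexOn ℝ Set.univ F) (hd : Differentiable ℝ F) (x y : E) :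
    F x + fderiv ℝ F x (y - x) ≤ F y := by
  set g : ℝ → ℝ := F ∘ (AffineMap.lineMap x y) with hg
  have hgc : ConvexOn ℝ Set.univ g := by
    have := hc.comp_affineMap (AffineMap.lineMap x y)
    simpa using this
  have hline : HasDerivAt (fun t : ℝ => AffineMap.lineMap x y t) (y - x) 0 := by
    have h1 : HasDerivAt (fun t : ℝ => t • (y - x) + x) ((1:ℝ) • (y - x)) 0 :=
      ((hasDerivAt_id (0:ℝ)).smul_const (y - x)).add_const x
    simp only [one_smul] at h1
    have heq : (fun t : ℝ => AffineMap.lineMap x y t) = fun t : ℝ => t • (y - x) + x := by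
      funext t
      simp [AffineMap.lineMap_apply, vsub_eq_sub, vadd_eq_add]
    rw [heq]
    exact h1
  have hgd : HasDerivAt g (fderiv ℝ F x (y - x)) 0 := by
    have hF : HasFDerivAt F (fderiv ℝ F x) (AffineMap.lineMap x y (0:ℝ)) := by
      have : AffineMap.lineMap x y (0:ℝ) = x := by simp
      rw [this]
      exact (hd x).hasFDerivAt
    exact hF.comp_hasDerivAt 0 hline
  have hslope := hgc.le_slope_of_hasDerivAt (Set.mem_univ 0) (Set.mem_univ 1) zero_lt_one hgd
  have hse : slope g 0 1 = g 1 - g 0 := by simp [slope_def_field]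
  rw [hse] at hslope
  have hg1 : g 1 = F y := by simp [hg]
  have hg0 : g 0 = F x := by simp [hg]
  rw [hg1, hg0] at hslope
  linarith

/-- Pointwise multiplication by a fixed vector, as a continuous linear map. -/
def pmul {dy : ℕ} (E : Fin dy → ℝ) :
    EuclideanSpace ℝ (Fin dy) →L[ℝ] EuclideanSpace ℝ (Fin dy) :=
  LinearMap.toContinuousLinearMap
    { toFun := fun a => WithLp.toLp 2 (fun k => a k * E k)
      map_add' := by
        intro u v; ext k
        simp only [PiLp.add_apply]
        ring
      map_smul' := by
        intro c u; ext k
        simp only [PiLp.smul_apply, RingHom.id_apply, smul_eq_mul]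
        ring }

@[simp] lemma pmul_apply {dy : ℕ} (E : Fin dy → ℝ) (a : EuclideanSpace ℝ (Fin dy)) (k : Fin dy) :
    pmul E a k = a k * E k := rfl

set_option maxHeartbeats 1000000 in
/-- Under Assumption 1 and `λ > 0`, for any `θ` that is not a global
minimum of `L`, the restricted map `(a,b,W) ↦ L̃(θ,a,b,W)` has no local minimum. -/
theorem failure_mode_no_restricted_local_min
    (m dx dy dθ : ℕ) (hm : 0 < m) (hdx : 0 < dx) (hdy : 0 < dy) (hdθ : 0 < dθ)
    (x : Fin m → EuclideanSpace ℝ (Fin dx))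
    (y : Fin m → EuclideanSpace ℝ (Fin dy))
    (f : EuclideanSpace ℝ (Fin dx) → EuclideanSpace ℝ (Fin dθ) → EuclideanSpace ℝ (Fin dy))
    (ℓ : EuclideanSpace ℝ (Fin dy) → EuclideanSpace ℝ (Fin dy) → ℝ)
    -- Assumption 1: each ℓ_{y_i} is differentiable, convex and nonnegative
    (hdiff : ∀ i : Fin m, Differentiable ℝ (fun q => ℓ q (y i)))
    (hconv : ∀ i : Fin m, ConvexOn ℝ Set.univ (fun q => ℓ q (y i)))
    (hnonneg : ∀ (i : Fin m) (q : EuclideanSpace ℝ (Fin dy)), 0 ≤ ℓ q (y i))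
    (lam : ℝ) (hlam : 0 < lam)
    -- the original objective L
    (L : EuclideanSpace ℝ (Fin dθ) → ℝ)
    (hL : ∀ θ, L θ = (1 / (m : ℝ)) * ∑ i, ℓ (f (x i) θ) (y i))
    -- the modified objective L̃
    (Lt : EuclideanSpace ℝ (Fin dθ) → EuclideanSpace ℝ (Fin dy) → EuclideanSpace ℝ (Fin dy) →
      (Fin dy → EuclideanSpace ℝ (Fin dx)) → ℝ)
    (hLt : ∀ θ a b W, Lt θ a b W =
      (1 / (m : ℝ)) * ∑ i, ℓ (f (x i) θ + addedNeuron dx dy a b W (x i)) (y i)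
        + lam * ‖a‖ ^ 2)
    (θ : EuclideanSpace ℝ (Fin dθ))
    (hθ : ¬ ∀ θ' : EuclideanSpace ℝ (Fin dθ), L θ ≤ L θ') :
    ∀ (a b : EuclideanSpace ℝ (Fin dy)) (W : Fin dy → EuclideanSpace ℝ (Fin dx)),
      ¬ IsLocalMin (fun p : EuclideanSpace ℝ (Fin dy) × EuclideanSpace ℝ (Fin dy) ×
          (Fin dy → EuclideanSpace ℝ (Fin dx)) =>
          Lt θ p.1 p.2.1 p.2.2) (a, b, W) := by
  classical
  intro a b W hmin
  -- Step A : a = 0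
  have ha0 : a = 0 := by
    by_contra hane
    set ones : EuclideanSpace ℝ (Fin dy) := WithLp.toLp 2 (fun _ => (1:ℝ)) with hones
    set γ : ℝ → EuclideanSpace ℝ (Fin dy) × EuclideanSpace ℝ (Fin dy) ×
        (Fin dy → EuclideanSpace ℝ (Fin dx)) :=
      fun t => (Real.exp (-t) • a, b + t • ones, W) with hγ
    have hγval : ∀ t, Lt θ (Real.exp (-t) • a) (b + t • ones) W =
        (1 / (m : ℝ)) * ∑ i, ℓ (f (x i) θ + addedNeuron dx dy a b W (x i)) (y i)
          + lam * (Real.exp (-t))^2 * ‖a‖ ^ 2 := by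
      intro t
      have hneu : ∀ x', addedNeuron dx dy (Real.exp (-t) • a) (b + t • ones) W x'
          = addedNeuron dx dy a b W x' := by
        intro x'
        ext k
        show (Real.exp (-t) • a) k * Real.exp (⟪W k, x'⟫ + (b + t • ones) k)
          = a k * Real.exp (⟪W k, x'⟫ + b k)
        have h1 : (Real.exp (-t) • a) k = Real.exp (-t) * a k := rfl
        have h2 : (b + t • ones) k = b k + t := by
          show b k + t * (1:ℝ) = b k + t
          ring
        rw [h1, h2, show ⟪W k, x'⟫ + (b k + t) = (⟪W k, x'⟫ + b k) + t by ring,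
          Real.exp_add, Real.exp_neg]
        field_simp
      have hnrm : ‖Real.exp (-t) • a‖ ^ 2 = (Real.exp (-t))^2 * ‖a‖^2 := by
        rw [norm_smul]
        simp [Real.norm_eq_abs, abs_of_pos (Real.exp_pos _), mul_pow]
      rw [hLt]
      simp only [hneu, hnrm]
      ring
    have hγ0 : γ 0 = (a, b, W) := by
      rw [hγ]
      simp
    have hcont : Filter.Tendsto γ (nhds 0) (nhds (a, b, W)) := by
      rw [← hγ0]
      apply Continuous.tendsto
      apply Continuous.prodMk
      · exact (Real.continuous_exp.comp continuous_neg).smul continuous_const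
      apply Continuous.prodMk
      · exact continuous_const.add (continuous_id.smul continuous_const)
      · exact continuous_const
    have hev : ∀ᶠ t in nhds (0:ℝ), Lt θ a b W ≤ Lt θ (Real.exp (-t) • a) (b + t • ones) W :=
      hcont.eventually hmin
    have hev' : ∀ᶠ t in nhdsWithin (0:ℝ) (Set.Ioi 0),
        Lt θ a b W ≤ Lt θ (Real.exp (-t) • a) (b + t • ones) W :=
      nhdsWithin_le_nhds hev
    have hlt : ∀ᶠ t in nhdsWithin (0:ℝ) (Set.Ioi 0),
        Lt θ (Real.exp (-t) • a) (b + t • ones) W < Lt θ a b W := by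
      filter_upwards [self_mem_nhdsWithin] with t ht
      have ht' : (0:ℝ) < t := ht
      have h00 : Lt θ a b W = Lt θ (Real.exp (-(0:ℝ)) • a) (b + (0:ℝ) • ones) W := by
        norm_num
      rw [hγval t, h00, hγval 0]
      have hexp : Real.exp (-t) < 1 := by
        rw [Real.exp_lt_one_iff]
        linarith
      have hexp0 : 0 < Real.exp (-t) := Real.exp_pos _
      have hna : 0 < ‖a‖^2 := by
        have := norm_pos_iff.mpr hane
        positivity
      have he1 : Real.exp (-(0:ℝ)) = 1 := by simp
      rw [he1]
      have hstep : lam * Real.exp (-t)^2 * ‖a‖^2 < lam * 1^2 * ‖a‖^2 := by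
        apply mul_lt_mul_of_pos_right _ hna
        apply mul_lt_mul_of_pos_left _ hlam
        nlinarith
      linarith
    obtain ⟨t, h1, h2⟩ := (hev'.and hlt).exists
    linarith
  subst ha0
  -- The derivative functionals
  set D : Fin m → (EuclideanSpace ℝ (Fin dy) →L[ℝ] ℝ) :=
    fun i => fderiv ℝ (fun q => ℓ q (y i)) (f (x i) θ) with hD
  set d : Fin m → Fin dy → ℝ := fun i k => D i (EuclideanSpace.single k 1) with hd
  -- value of Φ at a = 0 is independent of (b', W')
  have hfadd : ∀ (i : Fin m) (b' : EuclideanSpace ℝ (Fin dy))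
      (W' : Fin dy → EuclideanSpace ℝ (Fin dx)),
      f (x i) θ + addedNeuron dx dy 0 b' W' (x i) = f (x i) θ := by
    intro i b' W'
    have h0 : addedNeuron dx dy 0 b' W' (x i) = 0 := by
      ext k
      show (0:ℝ) * Real.exp (⟪W' k, x i⟫ + b' k) = 0
      ring
    rw [h0, add_zero]
  have hval : ∀ (b' : EuclideanSpace ℝ (Fin dy)) (W' : Fin dy → EuclideanSpace ℝ (Fin dx)),
      Lt θ 0 b' W' = Lt θ 0 b W := by
    intro b' W'
    rw [hLt, hLt]
    simp only [hfadd]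
  -- extract the ε-ball of the local minimum
  rw [IsLocalMin, IsMinFilter, Metric.eventually_nhds_iff] at hmin
  obtain ⟨ε, hε, hball⟩ := hmin
  -- Key first-order condition, valid in a neighborhood
  have key : ∀ (b' : EuclideanSpace ℝ (Fin dy)) (W' : Fin dy → EuclideanSpace ℝ (Fin dx)),
      dist b' b < ε → dist W' W < ε → ∀ k : Fin dy,
      ∑ i, d i k * Real.exp (⟪W' k, x i⟫ + b' k) = 0 := by
    intro b' W' hb' hW' k
    set E : Fin m → Fin dy → ℝ := fun i k => Real.exp (⟪W' k, x i⟫ + b' k) with hE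
    have hloc : IsLocalMin (fun a' => Lt θ a' b' W') (0 : EuclideanSpace ℝ (Fin dy)) := by
      rw [IsLocalMin, IsMinFilter]
      filter_upwards [Metric.ball_mem_nhds (0 : EuclideanSpace ℝ (Fin dy)) hε] with a' ha'
      have hd1 : dist ((a', b', W') : EuclideanSpace ℝ (Fin dy) × EuclideanSpace ℝ (Fin dy) ×
          (Fin dy → EuclideanSpace ℝ (Fin dx))) ((0 : EuclideanSpace ℝ (Fin dy)), b, W) < ε := by
        rw [Prod.dist_eq, Prod.dist_eq]
        refine max_lt (by simpa [Metric.mem_ball] using ha') (max_lt hb' hW')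
      have h2 := hball hd1
      calc Lt θ 0 b' W' = Lt θ 0 b W := hval b' W'
        _ ≤ Lt θ a' b' W' := h2
    -- differentiability at 0
    have hterm : ∀ i : Fin m, HasFDerivAt
        (fun a' : EuclideanSpace ℝ (Fin dy) =>
          ℓ (f (x i) θ + addedNeuron dx dy a' b' W' (x i)) (y i))
        ((D i).comp (pmul (E i))) 0 := by
      intro i
      have hinner : HasFDerivAt
          (fun a' : EuclideanSpace ℝ (Fin dy) => f (x i) θ + pmul (E i) a') (pmul (E i)) 0 :=
        (pmul (E i)).hasFDerivAt.const_add _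
      have h0 : f (x i) θ + pmul (E i) 0 = f (x i) θ := by
        rw [map_zero, add_zero]
      have hout : HasFDerivAt (fun q => ℓ q (y i)) (D i) (f (x i) θ + pmul (E i) 0) := by
        rw [h0]
        exact (hdiff i _).hasFDerivAt
      have hcomp := hout.comp 0 hinner
      have heq2 : (fun a' : EuclideanSpace ℝ (Fin dy) =>
            ℓ (f (x i) θ + addedNeuron dx dy a' b' W' (x i)) (y i))
          = fun a' : EuclideanSpace ℝ (Fin dy) => ℓ (f (x i) θ + pmul (E i) a') (y i) := rfl
      rw [heq2]
      exact hcomp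
    have hnorm2 : HasFDerivAt (fun a' : EuclideanSpace ℝ (Fin dy) => ‖a'‖^2)
        (0 : EuclideanSpace ℝ (Fin dy) →L[ℝ] ℝ) 0 := by
      rw [hasFDerivAt_iff_isLittleO_nhds_zero]
      have heq : (fun h : EuclideanSpace ℝ (Fin dy) =>
          ‖(0 : EuclideanSpace ℝ (Fin dy)) + h‖^2 - ‖(0 : EuclideanSpace ℝ (Fin dy))‖^2
            - (0 : EuclideanSpace ℝ (Fin dy) →L[ℝ] ℝ) h)
          = fun h : EuclideanSpace ℝ (Fin dy) => ‖h‖^2 := by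
        funext h; simp
      rw [heq]
      apply Asymptotics.isLittleO_iff.mpr
      intro c hc
      filter_upwards [Metric.ball_mem_nhds (0 : EuclideanSpace ℝ (Fin dy)) hc] with h hh
      have hhn : ‖h‖ < c := by simpa [Metric.mem_ball, dist_eq_norm] using hh
      have h1 : ‖‖h‖^2‖ = ‖h‖ * ‖h‖ := by
        rw [Real.norm_of_nonneg (by positivity)]; ring
      rw [h1]
      nlinarith [norm_nonneg h]
    have hψeq : (fun a' => Lt θ a' b' W') = fun a' : EuclideanSpace ℝ (Fin dy) =>
        (1 / (m : ℝ)) * ∑ i, ℓ (f (x i) θ + addedNeuron dx dy a' b' W' (x i)) (y i)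
          + lam * ‖a'‖ ^ 2 := by
      funext a'
      exact hLt θ a' b' W'
    have hψd : HasFDerivAt (fun a' => Lt θ a' b' W')
        ((1 / (m:ℝ)) • ∑ i, (D i).comp (pmul (E i))
          + lam • (0 : EuclideanSpace ℝ (Fin dy) →L[ℝ] ℝ)) 0 := by
      rw [hψeq]
      exact ((HasFDerivAt.fun_sum (fun i _ => hterm i)).const_mul _).add (hnorm2.const_mul lam)
    have hT0 : ((1 / (m:ℝ)) • ∑ i, (D i).comp (pmul (E i))
        + lam • (0 : EuclideanSpace ℝ (Fin dy) →L[ℝ] ℝ)) = 0 :=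
      hloc.hasFDerivAt_eq_zero hψd
    have happ := congrArg (fun T : EuclideanSpace ℝ (Fin dy) →L[ℝ] ℝ =>
      T (EuclideanSpace.single k 1)) hT0
    simp only [ContinuousLinearMap.add_apply, ContinuousLinearMap.smul_apply,
      ContinuousLinearMap.sum_apply, ContinuousLinearMap.comp_apply,
      ContinuousLinearMap.zero_apply, smul_eq_mul, mul_zero, add_zero,
      ContinuousLinearMap.coe_smul', Pi.smul_apply] at happ
    have hsingle : ∀ i, pmul (E i) (EuclideanSpace.single k 1)
        = E i k • (EuclideanSpace.single k 1 : EuclideanSpace ℝ (Fin dy)) := by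
      intro i
      ext l
      have hl : pmul (E i) (EuclideanSpace.single k 1) l
          = (EuclideanSpace.single k 1 : EuclideanSpace ℝ (Fin dy)) l * E i l := rfl
      have hr : (E i k • (EuclideanSpace.single k 1 : EuclideanSpace ℝ (Fin dy))) l
          = E i k * (EuclideanSpace.single k 1 : EuclideanSpace ℝ (Fin dy)) l := rfl
      rw [hl, hr, EuclideanSpace.single_apply]
      by_cases hlk : l = k
      · subst hlk; simp
      · simp [hlk]
    have hsum0 : ∑ i, d i k * E i k = 0 := by
      have h3 : (1 / (m:ℝ)) * ∑ i, D i (pmul (E i) (EuclideanSpace.single k 1)) = 0 := happ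
      rw [Finset.sum_congr rfl (fun i _ => by
        rw [hsingle i, (D i).map_smul, smul_eq_mul])] at h3
      have hm' : (m:ℝ) ≠ 0 := Nat.cast_ne_zero.mpr hm.ne'
      rw [mul_eq_zero] at h3
      rcases h3 with h3 | h3
      · exact absurd h3 (by positivity)
      · rw [← h3]
        apply Finset.sum_congr rfl
        intro i _
        rw [hd]
        ring
    exact hsum0
  -- the grouped gradient sums vanish
  obtain ⟨v, hv⟩ := exists_separating_direction m dx x
  have grouped : ∀ (i : Fin m) (k : Fin dy),
      ∑ j ∈ Finset.univ.filter (fun j => x j = x i), d j k = 0 := by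
    intro i k
    set δ : ℝ := ε / (‖v‖ + 1) with hδ
    have hδpos : 0 < δ := by positivity
    have hvan : ∀ s : ℝ, |s| < δ →
        ∑ j, (d j k * Real.exp (⟪W k, x j⟫ + b k)) * Real.exp (⟪v, x j⟫ * s) = 0 := by
      intro s hs
      have habs : |s| * (‖v‖ + 1) < ε := by
        have h' : |s| < ε / (‖v‖ + 1) := by rw [← hδ]; exact hs
        exact (lt_div_iff₀ (by positivity : (0:ℝ) < ‖v‖ + 1)).mp h'
      have hWd : dist (fun k' => W k' + s • v :
          Fin dy → EuclideanSpace ℝ (Fin dx)) W < ε := by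
        rw [dist_pi_lt_iff hε]
        intro k'
        have h4 : dist (W k' + s • v) (W k') = ‖s • v‖ := by
          rw [dist_eq_norm, add_sub_cancel_left]
        rw [h4, norm_smul, Real.norm_eq_abs]
        have h5 : |s| * ‖v‖ ≤ |s| * (‖v‖ + 1) := by
          apply mul_le_mul_of_nonneg_left _ (abs_nonneg s)
          linarith
        linarith
      have h6 := key b (fun k' => W k' + s • v) (by simpa using hε) hWd k
      rw [← h6]
      apply Finset.sum_congr rfl
      intro j _
      have hexpeq : Real.exp (⟪W k + s • v, x j⟫ + b k)
          = Real.exp (⟪W k, x j⟫ + b k) * Real.exp (⟪v, x j⟫ * s) := by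
        rw [← Real.exp_add, inner_add_left, real_inner_smul_left]
        congr 1
        ring
      rw [hexpeq]
      ring
    have h7 := expsum_eq_zero m (fun j => d j k * Real.exp (⟪W k, x j⟫ + b k))
      (fun j => ⟪v, x j⟫) δ hδpos hvan i
    have hfil : Finset.univ.filter (fun j => ⟪v, x j⟫ = ⟪v, x i⟫)
        = Finset.univ.filter (fun j => x j = x i) := by
      apply Finset.filter_congr
      intro j _
      constructor
      · intro h; exact hv j i h
      · intro h; rw [h]
    rw [hfil] at h7
    have hexp : 0 < Real.exp (⟪W k, x i⟫ + b k) := Real.exp_pos _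
    have h7' : (∑ j ∈ Finset.univ.filter (fun j => x j = x i), d j k)
        * Real.exp (⟪W k, x i⟫ + b k) = 0 := by
      rw [Finset.sum_mul]
      calc ∑ j ∈ Finset.univ.filter (fun j => x j = x i),
            d j k * Real.exp (⟪W k, x i⟫ + b k)
          = ∑ j ∈ Finset.univ.filter (fun j => x j = x i),
            d j k * Real.exp (⟪W k, x j⟫ + b k) := by
            apply Finset.sum_congr rfl
            intro j hj
            rw [(Finset.mem_filter.mp hj).2]
        _ = 0 := h7
    exact (mul_eq_zero.mp h7').resolve_right hexp.ne'
  -- conclude : θ is a global minimum of L, contradiction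
  push_neg at hθ
  obtain ⟨θ', hθ'⟩ := hθ
  have hglobal : L θ ≤ L θ' := by
    rw [hL, hL]
    have hsum : ∀ j : Fin m, ℓ (f (x j) θ) (y j) + D j (f (x j) θ' - f (x j) θ)
        ≤ ℓ (f (x j) θ') (y j) :=
      fun j => convex_grad_ineq _ (hconv j) (hdiff j) _ _
    have hDzero : ∑ j, D j (f (x j) θ' - f (x j) θ) = 0 := by
      rw [← Finset.sum_fiberwise_of_maps_to (g := x) (t := Finset.univ.image x)
        (fun j _ => Finset.mem_image_of_mem x (Finset.mem_univ j))
        (fun j => D j (f (x j) θ' - f (x j) θ))]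
      apply Finset.sum_eq_zero
      intro z hz
      obtain ⟨i, _, rfl⟩ := Finset.mem_image.mp hz
      have hTzero : (∑ j ∈ Finset.univ.filter (fun j => x j = x i), D j) = 0 := by
        apply ContinuousLinearMap.coe_injective
        apply Module.Basis.ext (EuclideanSpace.basisFun (Fin dy) ℝ).toBasis
        intro k
        simp only [OrthonormalBasis.coe_toBasis, EuclideanSpace.basisFun_apply,
          ContinuousLinearMap.coe_coe, ContinuousLinearMap.sum_apply,
          ContinuousLinearMap.coe_sum', Finset.sum_apply, LinearMap.zero_apply,
          ContinuousLinearMap.coe_zero]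
        exact grouped i k
      calc ∑ j ∈ Finset.univ.filter (fun j => x j = x i), D j (f (x j) θ' - f (x j) θ)
          = ∑ j ∈ Finset.univ.filter (fun j => x j = x i), D j (f (x i) θ' - f (x i) θ) := by
            apply Finset.sum_congr rfl
            intro j hj
            rw [(Finset.mem_filter.mp hj).2]
        _ = (∑ j ∈ Finset.univ.filter (fun j => x j = x i), D j) (f (x i) θ' - f (x i) θ) := by
            rw [ContinuousLinearMap.sum_apply]
        _ = 0 := by rw [hTzero]; rfl
    have h8 : ∑ j, ℓ (f (x j) θ) (y j) ≤ ∑ j, ℓ (f (x j) θ') (y j) := by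
      have h9 := Finset.sum_le_sum (fun j (_ : j ∈ Finset.univ) => hsum j)
      rw [Finset.sum_add_distrib, hDzero, add_zero] at h9
      exact h9
    have hm' : (0:ℝ) < 1 / (m:ℝ) := by positivity
    exact mul_le_mul_of_nonneg_left h8 hm'.le
  linarith
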